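/- If P is a geodesic in a connected graph G, then no two distinct edges of P are in the Djoković–Winkler relation Θ. -/

import Mathlib

open SimpleGraph

/-- A walk is a geodesic if its length equals the distance between its endpoints. -/
def IsGeodesic {V : Type*} (G : SimpleGraph V) {u v : V} (p : G.Walk u v) : Prop :=
  p.length = G.dist u v

private lemma mem_edges_exists_getVert {V : Type*} {G : SimpleGraph V} {a b : V}
    (p : G.Walk a b) {e : Sym2 V} (h : e ∈ p.edges) :
    ∃ i, i < p.length ∧ s(p.getVert i, p.getVert (i + 1)) = e := by
  induction p with
  | nil => simp at h
  | @cons u v w hadj q ih =>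
    rw [SimpleGraph.Walk.edges_cons, List.mem_cons] at h
    rcases h with h | h
    · exact ⟨0, by simp, by
        simp [SimpleGraph.Walk.getVert_zero, SimpleGraph.Walk.getVert_cons_succ, h.symm]⟩
    · obtain ⟨i, hi, he⟩ := ih h
      exact ⟨i + 1, by simpa using Nat.succ_lt_succ hi, by
        simpa [SimpleGraph.Walk.getVert_cons_succ] using he⟩

private lemma dist_getVert_le {V : Type*} {G : SimpleGraph V} (hconn : G.Connected) {a b : V}
    (p : G.Walk a b) (i k : ℕ) (h : i + k ≤ p.length) :
    G.dist (p.getVert i) (p.getVert (i + k)) ≤ k := by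
  induction k with
  | zero => simp
  | succ k ih =>
    have h1 : i + k < p.length := by omega
    have hadj := p.adj_getVert_succ h1
    have hd : G.dist (p.getVert (i + k)) (p.getVert (i + k + 1)) ≤ 1 :=
      SimpleGraph.dist_le hadj.toWalk
    have ih' := ih (by omega)
    calc G.dist (p.getVert i) (p.getVert (i + (k + 1)))
        = G.dist (p.getVert i) (p.getVert (i + k + 1)) := by
          rw [show i + (k + 1) = i + k + 1 by ring]
      _ ≤ G.dist (p.getVert i) (p.getVert (i + k)) +
          G.dist (p.getVert (i + k)) (p.getVert (i + k + 1)) := hconn.dist_triangle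
      _ ≤ k + 1 := by omega

private lemma dist_getVert_eq {V : Type*} {G : SimpleGraph V} (hconn : G.Connected) {a b : V}
    (p : G.Walk a b) (hp : IsGeodesic G p) (i j : ℕ) (hij : i ≤ j) (hj : j ≤ p.length) :
    G.dist (p.getVert i) (p.getVert j) = j - i := by
  obtain ⟨k, rfl⟩ := Nat.exists_eq_add_of_le hij
  have hle := dist_getVert_le hconn p i k (by omega)
  have h1 : G.dist a (p.getVert i) ≤ i := by
    have := dist_getVert_le hconn p 0 i (by omega)
    simpa using this
  have h2 : G.dist (p.getVert (i + k)) b ≤ p.length - (i + k) := by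
    have := dist_getVert_le hconn p (i + k) (p.length - (i + k)) (by omega)
    rw [show i + k + (p.length - (i + k)) = p.length by omega, p.getVert_length] at this
    exact this
  have htri : G.dist a b ≤ G.dist a (p.getVert i) +
      (G.dist (p.getVert i) (p.getVert (i + k)) + G.dist (p.getVert (i + k)) b) :=
    le_trans hconn.dist_triangle (by
      exact add_le_add_right hconn.dist_triangle _)
  rw [← hp] at htri
  omega

private lemma key_lemma {V : Type*} {G : SimpleGraph V} (hconn : G.Connected) {a b : V}
    (p : G.Walk a b) (hp : IsGeodesic G p) {i j : ℕ} (hij : i < j) (hj : j < p.length)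
    {x y u v : V} (hx : s(x, y) = s(p.getVert i, p.getVert (i + 1)))
    (hu : s(u, v) = s(p.getVert j, p.getVert (j + 1))) :
    G.dist x u + G.dist y v = G.dist x v + G.dist y u := by
  have d1 := dist_getVert_eq hconn p hp i j (by omega) (by omega)
  have d2 := dist_getVert_eq hconn p hp (i + 1) (j + 1) (by omega) (by omega)
  have d3 := dist_getVert_eq hconn p hp i (j + 1) (by omega) (by omega)
  have d4 := dist_getVert_eq hconn p hp (i + 1) j (by omega) (by omega)
  rw [Sym2.eq_iff] at hx hu
  rcases hx with ⟨rfl, rfl⟩ | ⟨rfl, rfl⟩ <;> rcases hu with ⟨rfl, rfl⟩ | ⟨rfl, rfl⟩ <;>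
    simp only [d1, d2, d3, d4] <;> omega

theorem geodesic_no_two_edges_dwRel {V : Type*} (G : SimpleGraph V) (hconn : G.Connected)
    {a b : V} (p : G.Walk a b) (hp : IsGeodesic G p)
    (x y u v : V) (hxy : s(x, y) ∈ p.edges) (huv : s(u, v) ∈ p.edges)
    (hne : s(x, y) ≠ s(u, v)) :
    G.dist x u + G.dist y v = G.dist x v + G.dist y u := by
  obtain ⟨i, hi, hei⟩ := mem_edges_exists_getVert p hxy
  obtain ⟨j, hj, hej⟩ := mem_edges_exists_getVert p huv
  have hij : i ≠ j := by
    rintro rfl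
    exact hne (hei ▸ hej)
  rcases hij.lt_or_gt with h | h
  · exact key_lemma hconn p hp h hj hei.symm hej.symm
  · have hk := key_lemma hconn p hp h hi hej.symm hei.symm
    rw [SimpleGraph.dist_comm (u := u) (v := x), SimpleGraph.dist_comm (u := v) (v := y),
      SimpleGraph.dist_comm (u := u) (v := y), SimpleGraph.dist_comm (u := v) (v := x)] at hk
    omega
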